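/- arXiv:1909.08969 — 7 statements merged into one kernel-verified Lean document; each statement's English description precedes it below -/
import Mathlib

section
/- Let W₁, W₂ : ℝ → ℝ be nondecreasing cumulative arrival (work) functions and let r₁, r₂ ≥ 0 with r₁ + r₂ = 1. Define U(t) = sup_{0 ≤ s ≤ t} ((W₁(t)+W₂(t)) − (W₁(s)+W₂(s)) − (t − s)), U₁(t) = sup_{0 ≤ s ≤ t} (W₁(t) − W₁(s) − r₁·(t − s)), and U₂(t) = sup_{0 ≤ s ≤ t} (W₂(t) − W₂(s) − r₂·(t − s)). Then for all t ≥ 0, U(t) ≤ U₁(t) + U₂(t). (Lemma 1 for the two-queue case.) -/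
lemma bdd_aux (W : ℝ → ℝ) (hW : Monotone W) (r t : ℝ) (hr : 0 ≤ r) :
    BddAbove ((fun s => W t - W s - r * (t - s)) '' Set.Icc (0 : ℝ) t) := by
  refine ⟨W t - W 0, ?_⟩
  rintro x ⟨s, ⟨hs0, hst⟩, rfl⟩
  have h1 : W 0 ≤ W s := hW hs0
  have h2 : 0 ≤ r * (t - s) := mul_nonneg hr (by linarith)
  dsimp; linarith

/-- Lemma 1 for the two-queue case (continuous time, Reich's formula). -/
theorem one_queue_le_two_queues_unfinished_work
    (W₁ W₂ : ℝ → ℝ) (hW₁ : Monotone W₁) (hW₂ : Monotone W₂)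
    (r₁ r₂ : ℝ) (hr₁ : 0 ≤ r₁) (hr₂ : 0 ≤ r₂) (hrsum : r₁ + r₂ = 1) :
    ∀ t : ℝ, 0 ≤ t →
      sSup ((fun s => (W₁ t + W₂ t) - (W₁ s + W₂ s) - (t - s)) '' Set.Icc (0 : ℝ) t)
        ≤ sSup ((fun s => W₁ t - W₁ s - r₁ * (t - s)) '' Set.Icc (0 : ℝ) t)
          + sSup ((fun s => W₂ t - W₂ s - r₂ * (t - s)) '' Set.Icc (0 : ℝ) t) := by
  intro t ht
  apply Real.sSup_le
  · rintro x ⟨s, hs, rfl⟩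
    have h1 : W₁ t - W₁ s - r₁ * (t - s) ≤
        sSup ((fun s => W₁ t - W₁ s - r₁ * (t - s)) '' Set.Icc (0 : ℝ) t) :=
      le_csSup (bdd_aux W₁ hW₁ r₁ t hr₁) ⟨s, hs, rfl⟩
    have h2 : W₂ t - W₂ s - r₂ * (t - s) ≤
        sSup ((fun s => W₂ t - W₂ s - r₂ * (t - s)) '' Set.Icc (0 : ℝ) t) :=
      le_csSup (bdd_aux W₂ hW₂ r₂ t hr₂) ⟨s, hs, rfl⟩
    have key : r₁ * (t - s) + r₂ * (t - s) = t - s := by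
      rw [← add_mul, hrsum, one_mul]
    dsimp
    linarith
  · have h1 : (0:ℝ) ≤ sSup ((fun s => W₁ t - W₁ s - r₁ * (t - s)) '' Set.Icc (0 : ℝ) t) := by
      exact le_csSup (bdd_aux W₁ hW₁ r₁ t hr₁) ⟨t, Set.right_mem_Icc.2 ht, by simp⟩
    have h2 : (0:ℝ) ≤ sSup ((fun s => W₂ t - W₂ s - r₂ * (t - s)) '' Set.Icc (0 : ℝ) t) := by
      exact le_csSup (bdd_aux W₂ hW₂ r₂ t hr₂) ⟨t, Set.right_mem_Icc.2 ht, by simp⟩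
    linarith
end

section
/- Let k ≥ 1, let w_l : ℕ → ℝ with w_l(n) ≥ 0 for l = 1,…,k be the work arriving to queue l in time slot n, and let r_l ≥ 0 with Σ_{l=1}^k r_l = 1. Define the single-queue unfinished-work sequence by the Lindley recursion U(0) = 0, U(n+1) = max(0, U(n) + Σ_{l=1}^k w_l(n) − 1), and for each l the sequence U_l(0) = 0, U_l(n+1) = max(0, U_l(n) + w_l(n) − r_l). Then for all n, U(n) ≤ Σ_{l=1}^k U_l(n). (Discrete-time version of Lemma 1.) -/
/-- Discrete-time version of Lemma 1 via Lindley recursions. -/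
theorem one_queue_le_k_queues_lindley
    (k : ℕ) (hk : 1 ≤ k)
    (w : Fin k → ℕ → ℝ) (hw : ∀ l n, 0 ≤ w l n)
    (r : Fin k → ℝ) (hr : ∀ l, 0 ≤ r l) (hrsum : ∑ l, r l = 1)
    (U : ℕ → ℝ) (hU0 : U 0 = 0)
    (hU : ∀ n, U (n + 1) = max 0 (U n + (∑ l, w l n) - 1))
    (Ul : Fin k → ℕ → ℝ) (hUl0 : ∀ l, Ul l 0 = 0)
    (hUl : ∀ l n, Ul l (n + 1) = max 0 (Ul l n + w l n - r l)) :
    ∀ n, U n ≤ ∑ l, Ul l n := by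
  intro n
  induction n with
  | zero => simp [hU0, hUl0]
  | succ n ih =>
    rw [hU n]
    have h1 : U n + (∑ l, w l n) - 1 ≤ ∑ l, (Ul l n + w l n - r l) := by
      rw [Finset.sum_sub_distrib, Finset.sum_add_distrib, hrsum]
      linarith
    calc max 0 (U n + (∑ l, w l n) - 1)
        ≤ max 0 (∑ l, (Ul l n + w l n - r l)) := max_le_max le_rfl h1
      _ ≤ ∑ l, max 0 (Ul l n + w l n - r l) := by
          apply max_le (Finset.sum_nonneg fun l _ => le_max_left _ _)
          exact Finset.sum_le_sum fun l _ => le_max_right _ _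
      _ = ∑ l, Ul l (n + 1) := by simp [hUl]
end

section
/- Let W₁, W₂ : ℝ → ℝ be nondecreasing cumulative arrival functions, r₁, r₂ ≥ 0 with r₁ + r₂ = 1, and b₁, b₂ real bucket sizes with b = b₁ + b₂. Define U(t) = sup_{0 ≤ s ≤ t} ((W₁(t)+W₂(t)) − (W₁(s)+W₂(s)) − (t − s)) and U_l(t) = sup_{0 ≤ s ≤ t} (W_l(t) − W_l(s) − r_l·(t − s)) for l = 1, 2, and let N(t) = ⌈max(0, U(t) − b)⌉ and N_l(t) = ⌈max(0, U_l(t) − b_l)⌉. Then for all t ≥ 0, N(t) ≤ N₁(t) + N₂(t): at every instant, the number of jobs waiting for tokens in the one-bucket system (r, b) = (r₁+r₂, b₁+b₂) is at most the total number of jobs waiting for tokens in the two sub-bucket systems (r₁, b₁) and (r₂, b₂). -/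
/-- At every instant, the number of jobs waiting for tokens in the one-bucket
system `(r₁+r₂, b₁+b₂)` is at most the total number waiting in the two
sub-bucket systems `(r₁, b₁)` and `(r₂, b₂)`. -/
theorem waiting_jobs_one_bucket_le_two_buckets
    (W₁ W₂ : ℝ → ℝ) (hW₁ : Monotone W₁) (hW₂ : Monotone W₂)
    (r₁ r₂ : ℝ) (hr₁ : 0 ≤ r₁) (hr₂ : 0 ≤ r₂) (hrsum : r₁ + r₂ = 1)
    (b₁ b₂ b : ℝ) (hb : b = b₁ + b₂)
    (U U₁ U₂ : ℝ → ℝ)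
    (hU : ∀ t, U t =
      sSup ((fun s => (W₁ t + W₂ t) - (W₁ s + W₂ s) - (t - s)) '' Set.Icc (0 : ℝ) t))
    (hU₁ : ∀ t, U₁ t =
      sSup ((fun s => W₁ t - W₁ s - r₁ * (t - s)) '' Set.Icc (0 : ℝ) t))
    (hU₂ : ∀ t, U₂ t =
      sSup ((fun s => W₂ t - W₂ s - r₂ * (t - s)) '' Set.Icc (0 : ℝ) t)) :
    ∀ t : ℝ, 0 ≤ t →
      (⌈max 0 (U t - b)⌉ : ℤ) ≤ ⌈max 0 (U₁ t - b₁)⌉ + ⌈max 0 (U₂ t - b₂)⌉ := by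
  intro t ht
  -- pointwise bounds for each sub-system sup
  have hbdd₁ : BddAbove ((fun s => W₁ t - W₁ s - r₁ * (t - s)) '' Set.Icc (0 : ℝ) t) := by
    refine ⟨W₁ t - W₁ 0, ?_⟩
    rintro x ⟨s, hs, rfl⟩
    have h1 : W₁ 0 ≤ W₁ s := hW₁ hs.1
    have h2 : 0 ≤ r₁ * (t - s) := mul_nonneg hr₁ (by linarith [hs.2])
    simp only
    linarith
  have hbdd₂ : BddAbove ((fun s => W₂ t - W₂ s - r₂ * (t - s)) '' Set.Icc (0 : ℝ) t) := by
    refine ⟨W₂ t - W₂ 0, ?_⟩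
    rintro x ⟨s, hs, rfl⟩
    have h1 : W₂ 0 ≤ W₂ s := hW₂ hs.1
    have h2 : 0 ≤ r₂ * (t - s) := mul_nonneg hr₂ (by linarith [hs.2])
    simp only
    linarith
  have hmem₁ : ∀ s ∈ Set.Icc (0 : ℝ) t, W₁ t - W₁ s - r₁ * (t - s) ≤ U₁ t := by
    intro s hs
    rw [hU₁]
    exact le_csSup hbdd₁ ⟨s, hs, rfl⟩
  have hmem₂ : ∀ s ∈ Set.Icc (0 : ℝ) t, W₂ t - W₂ s - r₂ * (t - s) ≤ U₂ t := by
    intro s hs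
    rw [hU₂]
    exact le_csSup hbdd₂ ⟨s, hs, rfl⟩
  have htt : t ∈ Set.Icc (0 : ℝ) t := ⟨ht, le_refl t⟩
  have hU₁0 : 0 ≤ U₁ t := by have := hmem₁ t htt; simpa using this
  have hU₂0 : 0 ≤ U₂ t := by have := hmem₂ t htt; simpa using this
  have hUle : U t ≤ U₁ t + U₂ t := by
    rw [hU]
    apply Real.sSup_le
    · rintro x ⟨s, hs, rfl⟩
      have h1 := hmem₁ s hs
      have h2 := hmem₂ s hs
      have : (1 : ℝ) * (t - s) = r₁ * (t - s) + r₂ * (t - s) := by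
        rw [← add_mul, hrsum]
      simp only
      linarith
    · linarith
  have hmaxle : max 0 (U t - b) ≤ max 0 (U₁ t - b₁) + max 0 (U₂ t - b₂) := by
    rcases le_or_gt (U t - b) 0 with h | h
    · have h1 := le_max_left (0:ℝ) (U₁ t - b₁)
      have h2 := le_max_left (0:ℝ) (U₂ t - b₂)
      rw [max_eq_left h]; linarith
    · rw [max_eq_right h.le]
      have h1 := le_max_right (0:ℝ) (U₁ t - b₁)
      have h2 := le_max_right (0:ℝ) (U₂ t - b₂)
      linarith [hUle]
  calc (⌈max 0 (U t - b)⌉ : ℤ)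
      ≤ ⌈max 0 (U₁ t - b₁) + max 0 (U₂ t - b₂)⌉ := Int.ceil_le_ceil hmaxle
    _ ≤ ⌈max 0 (U₁ t - b₁)⌉ + ⌈max 0 (U₂ t - b₂)⌉ := Int.ceil_add_le _ _
end

section
/- Let k ≥ 1, let W_l : ℝ → ℝ for l = 1,…,k be nondecreasing cumulative arrival functions, let r_l ≥ 0 with Σ_{l=1}^k r_l = 1, and let b_l be real bucket sizes with b = Σ_{l=1}^k b_l. Define W = Σ_{l=1}^k W_l, U(t) = sup_{0 ≤ s ≤ t} (W(t) − W(s) − (t − s)), U_l(t) = sup_{0 ≤ s ≤ t} (W_l(t) − W_l(s) − r_l·(t − s)), N(t) = ⌈max(0, U(t) − b)⌉, and N_l(t) = ⌈max(0, U_l(t) − b_l)⌉. Then for all t ≥ 0, N(t) ≤ Σ_{l=1}^k N_l(t): at every instant, the number of jobs waiting for tokens in the one-bucket system is at most the total number waiting across the k sub-bucket systems. -/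
/-- At every instant, the number of jobs waiting for tokens in the one-bucket
system is at most the total number waiting across the `k` sub-bucket systems. -/
theorem waiting_jobs_one_bucket_le_k_buckets
    (k : ℕ) (hk : 1 ≤ k)
    (W : Fin k → ℝ → ℝ) (hW : ∀ l, Monotone (W l))
    (r : Fin k → ℝ) (hr : ∀ l, 0 ≤ r l) (hrsum : ∑ l, r l = 1)
    (b : Fin k → ℝ) (btot : ℝ) (hb : btot = ∑ l, b l)
    (U : ℝ → ℝ)
    (hU : ∀ t, U t =
      sSup ((fun s => (∑ l, W l t) - (∑ l, W l s) - (t - s)) '' Set.Icc (0 : ℝ) t))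
    (Ul : Fin k → ℝ → ℝ)
    (hUl : ∀ l t, Ul l t =
      sSup ((fun s => W l t - W l s - r l * (t - s)) '' Set.Icc (0 : ℝ) t)) :
    ∀ t : ℝ, 0 ≤ t →
      (⌈max 0 (U t - btot)⌉ : ℤ) ≤ ∑ l, ⌈max 0 (Ul l t - b l)⌉ := by
  intro t ht
  have htmem : t ∈ Set.Icc (0 : ℝ) t := ⟨ht, le_refl t⟩
  have hbdd : ∀ l, BddAbove ((fun s => W l t - W l s - r l * (t - s)) '' Set.Icc (0 : ℝ) t) := by
    intro l
    refine ⟨W l t - W l 0, ?_⟩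
    rintro x ⟨s, hs, rfl⟩
    have h1 := hW l hs.1
    have h2 : 0 ≤ r l * (t - s) := mul_nonneg (hr l) (by linarith [hs.2])
    simp only
    linarith
  have hUle : U t ≤ ∑ l, Ul l t := by
    rw [hU]
    apply csSup_le ⟨_, Set.mem_image_of_mem _ htmem⟩
    rintro x ⟨s, hs, rfl⟩
    have heq : (∑ l, W l t) - (∑ l, W l s) - (t - s)
        = ∑ l, (W l t - W l s - r l * (t - s)) := by
      rw [Finset.sum_sub_distrib, Finset.sum_sub_distrib, ← Finset.sum_mul, hrsum, one_mul]
    simp only [heq]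
    apply Finset.sum_le_sum
    intro l _
    rw [hUl]
    exact le_csSup (hbdd l) (Set.mem_image_of_mem _ hs)
  have key : max 0 (U t - btot) ≤ ∑ l, max 0 (Ul l t - b l) := by
    apply max_le
    · exact Finset.sum_nonneg fun l _ => le_max_left _ _
    · calc U t - btot ≤ ∑ l, (Ul l t - b l) := by
            rw [hb, Finset.sum_sub_distrib] at *; linarith [hUle]
        _ ≤ ∑ l, max 0 (Ul l t - b l) := Finset.sum_le_sum fun l _ => le_max_right _ _
  calc (⌈max 0 (U t - btot)⌉ : ℤ) ≤ ⌈∑ l, max 0 (Ul l t - b l)⌉ := Int.ceil_le_ceil key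
    _ ≤ ∑ l, ⌈max 0 (Ul l t - b l)⌉ := by
        apply Int.ceil_le.mpr
        push_cast
        exact Finset.sum_le_sum fun l _ => Int.le_ceil _
end

section
/- Let k ≥ 1, let w_l : ℕ → ℝ with w_l(n) ≥ 0 be the work arriving to sub-system l in slot n, let r_l ≥ 0 with Σ_{l=1}^k r_l = 1, and let b_l be real bucket sizes with b = Σ_{l=1}^k b_l. Define the unfinished-work sequences by the Lindley recursions U(0) = 0, U(n+1) = max(0, U(n) + Σ_{l=1}^k w_l(n) − 1) and U_l(0) = 0, U_l(n+1) = max(0, U_l(n) + w_l(n) − r_l), and the cumulative delay sums S(n) = Σ_{m=0}^{n−1} ⌈max(0, U(m) − b)⌉ and S^{(k)}(n) = Σ_{m=0}^{n−1} Σ_{l=1}^k ⌈max(0, U_l(m) − b_l)⌉. Then for all n, S(n) ≤ S^{(k)}(n): the cumulative job delay accrued by the one-bucket system (rate 1, bucket size b) never exceeds that accrued by the k sub-bucket systems (rates r_l, bucket sizes b_l). (Discrete-time version of Theorem 1.) -/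
lemma ceil_sum_le {k : ℕ} (f : Fin k → ℝ) :
    (⌈∑ l, f l⌉ : ℤ) ≤ ∑ l, (⌈f l⌉ : ℤ) := by
  classical
  induction (Finset.univ : Finset (Fin k)) using Finset.induction with
  | empty => simp
  | insert _ _ h ih =>
      rw [Finset.sum_insert h, Finset.sum_insert h]
      exact le_trans (Int.ceil_add_le _ _) (by linarith)

/-- Discrete-time version of Theorem 1: the cumulative job delay accrued by the
one-bucket system (rate 1, bucket size `b`) never exceeds that accrued by the
`k` sub-bucket systems (rates `r l`, bucket sizes `b l`). -/
theorem cumulative_delay_one_bucket_le_k_buckets_discrete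
    (k : ℕ) (hk : 1 ≤ k)
    (w : Fin k → ℕ → ℝ) (hw : ∀ l n, 0 ≤ w l n)
    (r : Fin k → ℝ) (hr : ∀ l, 0 ≤ r l) (hrsum : ∑ l, r l = 1)
    (b : Fin k → ℝ) (btot : ℝ) (hb : btot = ∑ l, b l)
    (U : ℕ → ℝ) (hU0 : U 0 = 0)
    (hU : ∀ n, U (n + 1) = max 0 (U n + (∑ l, w l n) - 1))
    (Ul : Fin k → ℕ → ℝ) (hUl0 : ∀ l, Ul l 0 = 0)
    (hUl : ∀ l n, Ul l (n + 1) = max 0 (Ul l n + w l n - r l)) :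
    ∀ n : ℕ,
      (∑ m ∈ Finset.range n, (⌈max 0 (U m - btot)⌉ : ℤ))
        ≤ ∑ m ∈ Finset.range n, ∑ l, (⌈max 0 (Ul l m - b l)⌉ : ℤ) := by
  have key : ∀ n, U n ≤ ∑ l, Ul l n := by
    intro n
    induction n with
    | zero => simp [hU0, hUl0]
    | succ n ih =>
        rw [hU n]
        have h1 : U n + (∑ l, w l n) - 1 ≤ ∑ l, (Ul l n + w l n - r l) := by
          rw [Finset.sum_sub_distrib, Finset.sum_add_distrib, hrsum]
          linarith
        have h2 : ∑ l, (Ul l n + w l n - r l) ≤ ∑ l, Ul l (n + 1) := by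
          apply Finset.sum_le_sum
          intro l _
          rw [hUl l n]; exact le_max_right _ _
        have h3 : (0:ℝ) ≤ ∑ l, Ul l (n + 1) := by
          apply Finset.sum_nonneg
          intro l _
          rw [hUl l n]; exact le_max_left _ _
        exact max_le h3 (le_trans h1 h2)
  intro n
  apply Finset.sum_le_sum
  intro m _
  have step1 : max 0 (U m - btot) ≤ ∑ l, max 0 (Ul l m - b l) := by
    have h1 : U m - btot ≤ ∑ l, (Ul l m - b l) := by
      rw [Finset.sum_sub_distrib, hb]
      linarith [key m]
    have h2 : ∑ l, (Ul l m - b l) ≤ ∑ l, max 0 (Ul l m - b l) :=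
      Finset.sum_le_sum fun l _ => le_max_right _ _
    have h3 : (0:ℝ) ≤ ∑ l, max 0 (Ul l m - b l) :=
      Finset.sum_nonneg fun l _ => le_max_left _ _
    exact max_le h3 (le_trans h1 h2)
  calc (⌈max 0 (U m - btot)⌉ : ℤ) ≤ ⌈∑ l, max 0 (Ul l m - b l)⌉ :=
        Int.ceil_le_ceil step1
    _ ≤ ∑ l, ⌈max 0 (Ul l m - b l)⌉ := ceil_sum_le _
end

section
/- Let k ≥ 1, let W_l : ℝ → ℝ for l = 1,…,k be nondecreasing cumulative arrival functions, let r_l ≥ 0 with Σ_{l=1}^k r_l = 1, and let b_l be real bucket sizes with b = Σ_{l=1}^k b_l. Define W = Σ_{l=1}^k W_l, U(t) = sup_{0 ≤ s ≤ t} (W(t) − W(s) − (t − s)), U_l(t) = sup_{0 ≤ s ≤ t} (W_l(t) − W_l(s) − r_l·(t − s)), N(t) = ⌈max(0, U(t) − b)⌉ and N_l(t) = ⌈max(0, U_l(t) − b_l)⌉. Assume the functions t ↦ N(t) and t ↦ N_l(t) (l = 1,…,k) are measurable on [0, t₀] and integrable there. Then the cumulative delays S(t₀) = ∫₀^{t₀}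 N(u) du and S^{(k)}(t₀) = ∫₀^{t₀} Σ_{l=1}^k N_l(u) du satisfy S(t₀) ≤ S^{(k)}(t₀) for every t₀ ≥ 0. (Theorem 1: splitting a token bucket (1, b) into k sub-token buckets (r_l, b_l) with Σ r_l = 1 and Σ b_l = b can never decrease the sum of job latencies, irrespective of how jobs are distributed among the sub-buckets.) -/
open MeasureTheory

lemma ceil_sum_le' {ι : Type*} (s : Finset ι) (f : ι → ℝ) :
    ⌈∑ i ∈ s, f i⌉ ≤ ∑ i ∈ s, ⌈f i⌉ := by
  classical
  induction s using Finset.induction with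
  | empty => simp
  | insert _ _ h ih =>
    rw [Finset.sum_insert h, Finset.sum_insert h]
    calc ⌈_ + _⌉ ≤ ⌈_⌉ + ⌈_⌉ := Int.ceil_add_le _ _
      _ ≤ _ := by omega

/-- Theorem 1: splitting a token bucket `(1, b)` into `k` sub-token buckets
`(r l, b l)` with `∑ r l = 1` and `∑ b l = b` can never decrease the sum of
job latencies, irrespective of how jobs are distributed among the sub-buckets. -/
theorem cumulative_delay_one_bucket_le_k_buckets
    (k : ℕ) (hk : 1 ≤ k)
    (W : Fin k → ℝ → ℝ) (hW : ∀ l, Monotone (W l))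
    (r : Fin k → ℝ) (hr : ∀ l, 0 ≤ r l) (hrsum : ∑ l, r l = 1)
    (b : Fin k → ℝ) (btot : ℝ) (hb : btot = ∑ l, b l)
    (U : ℝ → ℝ)
    (hU : ∀ t, U t =
      sSup ((fun s => (∑ l, W l t) - (∑ l, W l s) - (t - s)) '' Set.Icc (0 : ℝ) t))
    (Ul : Fin k → ℝ → ℝ)
    (hUl : ∀ l t, Ul l t =
      sSup ((fun s => W l t - W l s - r l * (t - s)) '' Set.Icc (0 : ℝ) t))
    (N : ℝ → ℤ) (hN : ∀ t, N t = ⌈max 0 (U t - btot)⌉)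
    (Nl : Fin k → ℝ → ℤ) (hNl : ∀ l t, Nl l t = ⌈max 0 (Ul l t - b l)⌉)
    (t₀ : ℝ) (ht₀ : 0 ≤ t₀)
    (hNmeas : Measurable fun u => (N u : ℝ))
    (hNint : IntervalIntegrable (fun u => (N u : ℝ)) volume 0 t₀)
    (hNlmeas : ∀ l, Measurable fun u => (Nl l u : ℝ))
    (hNlint : ∀ l, IntervalIntegrable (fun u => (Nl l u : ℝ)) volume 0 t₀) :
    (∫ u in (0 : ℝ)..t₀, (N u : ℝ)) ≤ ∫ u in (0 : ℝ)..t₀, ∑ l, (Nl l u : ℝ) := by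
  -- pointwise bound
  have key : ∀ t, 0 ≤ t → (N t : ℝ) ≤ ∑ l, (Nl l t : ℝ) := by
    intro t ht
    -- bounded above
    have hbdd : ∀ l, BddAbove ((fun s => W l t - W l s - r l * (t - s)) '' Set.Icc (0:ℝ) t) := by
      intro l
      refine ⟨W l t - W l 0, ?_⟩
      rintro x ⟨s, hs, rfl⟩
      have h1 : W l 0 ≤ W l s := hW l hs.1
      have h2 : 0 ≤ r l * (t - s) := mul_nonneg (hr l) (by linarith [hs.2])
      dsimp only
      linarith
    -- U t ≤ ∑ Ul l t
    have hUle : U t ≤ ∑ l, Ul l t := by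
      rw [hU]
      apply csSup_le
      · exact (Set.nonempty_Icc.mpr ht).image _
      · rintro x ⟨s, hs, rfl⟩
        dsimp only
        have : (∑ l, W l t) - (∑ l, W l s) - (t - s)
            = ∑ l, (W l t - W l s - r l * (t - s)) := by
          rw [Finset.sum_sub_distrib, Finset.sum_sub_distrib, ← Finset.sum_mul, hrsum]
          ring
        rw [this]
        apply Finset.sum_le_sum
        intro l _
        rw [hUl]
        exact le_csSup (hbdd l) ⟨s, hs, rfl⟩
    -- max bound
    have hmax : max 0 (U t - btot) ≤ ∑ l, max 0 (Ul l t - b l) := by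
      apply max_le
      · exact Finset.sum_nonneg fun l _ => le_max_left _ _
      · rw [hb]
        calc U t - ∑ l, b l ≤ (∑ l, Ul l t) - ∑ l, b l := by linarith
          _ = ∑ l, (Ul l t - b l) := (Finset.sum_sub_distrib _ _).symm
          _ ≤ ∑ l, max 0 (Ul l t - b l) :=
              Finset.sum_le_sum fun l _ => le_max_right _ _
    have : N t ≤ ∑ l, Nl l t := by
      rw [hN]
      calc ⌈max 0 (U t - btot)⌉ ≤ ⌈∑ l, max 0 (Ul l t - b l)⌉ := Int.ceil_le_ceil hmax
        _ ≤ ∑ l, ⌈max 0 (Ul l t - b l)⌉ := ceil_sum_le' _ _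
        _ = ∑ l, Nl l t := by simp [hNl]
    calc (N t : ℝ) ≤ ((∑ l, Nl l t : ℤ) : ℝ) := by exact_mod_cast this
      _ = ∑ l, (Nl l t : ℝ) := by push_cast; ring
  have hsumint : IntervalIntegrable (fun u => ∑ l, (Nl l u : ℝ)) volume 0 t₀ :=
    by
    have h := IntervalIntegrable.sum (μ := volume) (a := (0:ℝ)) (b := t₀)
      Finset.univ (fun l (_ : l ∈ Finset.univ) => hNlint l)
    convert h using 1
    · rfl
    ext u
    simp
  apply intervalIntegral.integral_mono_on ht₀ hNint hsumint
  intro u hu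
  exact key u hu.1
end

section
/- Let w₁, w₂ : ℕ → ℝ with w₁(n), w₂(n) ≥ 0 and let r₁, r₂ ≥ 0 with r₁ + r₂ = 1. Define the Lindley recursions U(0) = 0, U(n+1) = max(0, U(n) + w₁(n) + w₂(n) − 1), and U_l(0) = 0, U_l(n+1) = max(0, U_l(n) + w_l(n) − r_l) for l = 1, 2. Then for all n, U(n) ≤ U₁(n) + U₂(n). (Discrete-time version of Lemma 1 for the two-queue case.) -/
/-- Discrete-time version of Lemma 1 for the two-queue case. -/
theorem one_queue_le_two_queues_lindley
    (w₁ w₂ : ℕ → ℝ) (hw₁ : ∀ n, 0 ≤ w₁ n) (hw₂ : ∀ n, 0 ≤ w₂ n)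
    (r₁ r₂ : ℝ) (hr₁ : 0 ≤ r₁) (hr₂ : 0 ≤ r₂) (hrsum : r₁ + r₂ = 1)
    (U : ℕ → ℝ) (hU0 : U 0 = 0)
    (hU : ∀ n, U (n + 1) = max 0 (U n + w₁ n + w₂ n - 1))
    (U₁ : ℕ → ℝ) (hU₁0 : U₁ 0 = 0)
    (hU₁ : ∀ n, U₁ (n + 1) = max 0 (U₁ n + w₁ n - r₁))
    (U₂ : ℕ → ℝ) (hU₂0 : U₂ 0 = 0)
    (hU₂ : ∀ n, U₂ (n + 1) = max 0 (U₂ n + w₂ n - r₂)) :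
    ∀ n, U n ≤ U₁ n + U₂ n := by
  intro n
  induction n with
  | zero => simp [hU0, hU₁0, hU₂0]
  | succ n ih =>
    rw [hU, hU₁, hU₂]
    have h1 : max 0 (U n + w₁ n + w₂ n - 1) ≤
        max 0 (U₁ n + w₁ n - r₁ + (U₂ n + w₂ n - r₂)) := by
      apply max_le_max le_rfl
      nlinarith
    refine h1.trans ?_
    have a := le_max_left 0 (U₁ n + w₁ n - r₁)
    have b := le_max_left 0 (U₂ n + w₂ n - r₂)
    have a' := le_max_right 0 (U₁ n + w₁ n - r₁)
    have b' := le_max_right 0 (U₂ n + w₂ n - r₂)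
    apply max_le (by linarith)
    linarith
end
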